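/- Let f : ℝ → ℝ be continuous with f(x+1) = f(x) + d for all x ∈ ℝ, d an integer, and let y ∈ ℝ. Suppose the fiber F = {x ∈ [0,1) : f(x) − y ∈ ℤ} is finite and that f is differentiable at each point x ∈ F with deriv f x ≠ 0. Then the sum over x ∈ F of the sign of deriv f x (which is +1 or −1 at each such point) equals d. -/

import Mathlib

open Set Filter

/-- Near a point with positive derivative, values to the right are larger. -/
private lemma ev_right_gt {f : ℝ → ℝ} {x : ℝ} (hd : DifferentiableAt ℝ f x)
    (h : 0 < deriv f x) : ∀ᶠ t in nhdsWithin x (Set.Ioi x), f x < f t := by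
  have hs := hd.hasDerivAt
  rw [hasDerivAt_iff_tendsto_slope] at hs
  have h1 : ∀ᶠ t in nhdsWithin x {x}ᶜ, 0 < slope f x t := hs.eventually (eventually_gt_nhds h)
  have h2 : nhdsWithin x (Set.Ioi x) ≤ nhdsWithin x {x}ᶜ :=
    nhdsWithin_mono _ (fun t ht => ne_of_gt ht)
  filter_upwards [h2 h1, self_mem_nhdsWithin] with t ht ht2
  have hx : (0:ℝ) < t - x := sub_pos.mpr (ht2 : x < t)
  have := mul_pos ht hx
  rw [slope_def_field, div_mul_cancel₀ _ (ne_of_gt hx)] at this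
  linarith

private lemma ev_right_lt {f : ℝ → ℝ} {x : ℝ} (hd : DifferentiableAt ℝ f x)
    (h : deriv f x < 0) : ∀ᶠ t in nhdsWithin x (Set.Ioi x), f t < f x := by
  have hs := hd.hasDerivAt
  rw [hasDerivAt_iff_tendsto_slope] at hs
  have h1 : ∀ᶠ t in nhdsWithin x {x}ᶜ, slope f x t < 0 := hs.eventually (eventually_lt_nhds h)
  have h2 : nhdsWithin x (Set.Ioi x) ≤ nhdsWithin x {x}ᶜ :=
    nhdsWithin_mono _ (fun t ht => ne_of_gt ht)
  filter_upwards [h2 h1, self_mem_nhdsWithin] with t ht ht2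
  have hx : (0:ℝ) < t - x := sub_pos.mpr (ht2 : x < t)
  have := mul_neg_of_neg_of_pos ht hx
  rw [slope_def_field, div_mul_cancel₀ _ (ne_of_gt hx)] at this
  linarith

private lemma ev_left_lt {f : ℝ → ℝ} {x : ℝ} (hd : DifferentiableAt ℝ f x)
    (h : 0 < deriv f x) : ∀ᶠ t in nhdsWithin x (Set.Iio x), f t < f x := by
  have hs := hd.hasDerivAt
  rw [hasDerivAt_iff_tendsto_slope] at hs
  have h1 : ∀ᶠ t in nhdsWithin x {x}ᶜ, 0 < slope f x t := hs.eventually (eventually_gt_nhds h)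
  have h2 : nhdsWithin x (Set.Iio x) ≤ nhdsWithin x {x}ᶜ :=
    nhdsWithin_mono _ (fun t ht => ne_of_lt ht)
  filter_upwards [h2 h1, self_mem_nhdsWithin] with t ht ht2
  have hx : t - x < 0 := sub_neg.mpr (ht2 : t < x)
  have := mul_neg_of_pos_of_neg ht hx
  rw [slope_def_field, div_mul_cancel₀ _ (ne_of_lt hx)] at this
  linarith

private lemma ev_left_gt {f : ℝ → ℝ} {x : ℝ} (hd : DifferentiableAt ℝ f x)
    (h : deriv f x < 0) : ∀ᶠ t in nhdsWithin x (Set.Iio x), f x < f t := by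
  have hs := hd.hasDerivAt
  rw [hasDerivAt_iff_tendsto_slope] at hs
  have h1 : ∀ᶠ t in nhdsWithin x {x}ᶜ, slope f x t < 0 := hs.eventually (eventually_lt_nhds h)
  have h2 : nhdsWithin x (Set.Iio x) ≤ nhdsWithin x {x}ᶜ :=
    nhdsWithin_mono _ (fun t ht => ne_of_lt ht)
  filter_upwards [h2 h1, self_mem_nhdsWithin] with t ht ht2
  have hx : t - x < 0 := sub_neg.mpr (ht2 : t < x)
  have := mul_pos_of_neg_of_neg ht hx
  rw [slope_def_field, div_mul_cancel₀ _ (ne_of_lt hx)] at this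
  linarith

/-- Key step lemma: for two consecutive fiber points, twice the jump of `f - y`
equals the sum of the two derivative signs. -/
private lemma pair_step (f : ℝ → ℝ) (y : ℝ) (hf : Continuous f) {x₁ x₂ : ℝ} (h12 : x₁ < x₂)
    (h1 : DifferentiableAt ℝ f x₁) (h1' : deriv f x₁ ≠ 0)
    (h2 : DifferentiableAt ℝ f x₂) (h2' : deriv f x₂ ≠ 0)
    (hk1 : ∃ k : ℤ, f x₁ - y = k) (hk2 : ∃ k : ℤ, f x₂ - y = k)
    (hgap : ∀ t ∈ Set.Ioo x₁ x₂, ∀ k : ℤ, f t - y ≠ k) :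
    2 * ((f x₂ - y) - (f x₁ - y)) =
      (if 0 < deriv f x₁ then (1:ℝ) else -1) + (if 0 < deriv f x₂ then (1:ℝ) else -1) := by
  obtain ⟨k₁, hgk1⟩ := hk1
  obtain ⟨k₂, hgk2⟩ := hk2
  set g : ℝ → ℝ := fun u => f u - y with hg
  have hgc : Continuous g := hf.sub continuous_const
  set t₀ : ℝ := (x₁ + x₂) / 2 with ht₀
  have ht₀m : t₀ ∈ Set.Ioo x₁ x₂ := ⟨by rw [ht₀]; linarith, by rw [ht₀]; linarith⟩
  set k : ℤ := ⌊g t₀⌋ with hk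
  have hmem : ∀ t ∈ Set.Ioo x₁ x₂, g t ∈ Set.Ioo (k : ℝ) ((k : ℝ) + 1) := by
    intro t ht
    have hsub : Set.uIcc t t₀ ⊆ Set.Ioo x₁ x₂ := by
      intro u hu
      rw [Set.mem_uIcc] at hu
      rcases hu with hu | hu
      · exact ⟨lt_of_lt_of_le ht.1 hu.1, lt_of_le_of_lt hu.2 ht₀m.2⟩
      · exact ⟨lt_of_lt_of_le ht₀m.1 hu.1, lt_of_le_of_lt hu.2 ht.2⟩
    constructor
    · by_contra hle
      push_neg at hle
      have hmemv : (k : ℝ) ∈ Set.uIcc (g t) (g t₀) :=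
        Set.mem_uIcc.mpr (Or.inl ⟨hle, Int.floor_le _⟩)
      obtain ⟨u, hu, hgu⟩ := intermediate_value_uIcc (hgc.continuousOn) hmemv
      exact hgap u (hsub hu) k hgu
    · by_contra hle
      push_neg at hle
      have hmemv : ((k : ℝ) + 1) ∈ Set.uIcc (g t₀) (g t) := by
        refine Set.mem_uIcc.mpr (Or.inl ⟨?_, hle⟩)
        have := Int.lt_floor_add_one (g t₀)
        rw [← hk] at this
        linarith
      obtain ⟨u, hu, hgu⟩ := intermediate_value_uIcc (hgc.continuousOn) hmemv
      refine hgap u (hsub (by rwa [Set.uIcc_comm] at hu)) (k + 1) ?_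
      show g u = ((k + 1 : ℤ) : ℝ)
      rw [hgu]; push_cast; ring
  have hev1 : ∀ᶠ t in nhdsWithin x₁ (Set.Ioi x₁), g t ∈ Set.Ioo (k:ℝ) ((k:ℝ)+1) := by
    filter_upwards [Ioo_mem_nhdsGT_of_mem (⟨le_refl x₁, h12⟩ : x₁ ∈ Set.Ico x₁ x₂)] with t ht
    exact hmem t ht
  have hev2 : ∀ᶠ t in nhdsWithin x₂ (Set.Iio x₂), g t ∈ Set.Ioo (k:ℝ) ((k:ℝ)+1) := by
    filter_upwards [Ioo_mem_nhdsLT_of_mem (⟨h12, le_refl x₂⟩ : x₂ ∈ Set.Ioc x₁ x₂)] with t ht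
    exact hmem t ht
  have ht1 : Tendsto g (nhdsWithin x₁ (Set.Ioi x₁)) (nhds (g x₁)) :=
    (hgc.continuousAt).continuousWithinAt
  have ht2 : Tendsto g (nhdsWithin x₂ (Set.Iio x₂)) (nhds (g x₂)) :=
    (hgc.continuousAt).continuousWithinAt
  have hb1 : (k : ℝ) ≤ g x₁ ∧ g x₁ ≤ (k : ℝ) + 1 :=
    ⟨ge_of_tendsto ht1 (hev1.mono fun t ht => ht.1.le),
     le_of_tendsto ht1 (hev1.mono fun t ht => ht.2.le)⟩
  have hb2 : (k : ℝ) ≤ g x₂ ∧ g x₂ ≤ (k : ℝ) + 1 :=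
    ⟨ge_of_tendsto ht2 (hev2.mono fun t ht => ht.1.le),
     le_of_tendsto ht2 (hev2.mono fun t ht => ht.2.le)⟩
  have hgx1 : g x₁ = (k₁ : ℝ) := hgk1
  have hgx2 : g x₂ = (k₂ : ℝ) := hgk2
  have hsign1 : (0 < deriv f x₁ ∧ g x₁ = (k : ℝ)) ∨ (deriv f x₁ < 0 ∧ g x₁ = (k : ℝ) + 1) := by
    rcases h1'.lt_or_gt with hneg | hpos
    · right
      refine ⟨hneg, ?_⟩
      obtain ⟨t, ht, htm⟩ := ((ev_right_lt h1 hneg).and hev1).exists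
      have hlt : (k:ℝ) < g x₁ := lt_trans htm.1 (by simpa [hg] using ht)
      rw [hgx1] at hlt hb1
      have : k₁ = k + 1 := by
        have u1 : k < k₁ := by exact_mod_cast hlt
        have u2 : (k₁:ℝ) ≤ (k:ℝ) + 1 := hb1.2
        have u3 : k₁ ≤ k + 1 := by exact_mod_cast u2
        omega
      rw [hgx1, this]; push_cast; ring
    · left
      refine ⟨hpos, ?_⟩
      obtain ⟨t, ht, htm⟩ := ((ev_right_gt h1 hpos).and hev1).exists
      have hlt : g x₁ < (k:ℝ) + 1 := lt_trans (by simpa [hg] using ht) htm.2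
      rw [hgx1] at hlt hb1
      have : k₁ = k := by
        have u1 : k₁ < k + 1 := by exact_mod_cast hlt
        have u2 : k ≤ k₁ := by exact_mod_cast hb1.1
        omega
      rw [hgx1, this]
  have hsign2 : (0 < deriv f x₂ ∧ g x₂ = (k : ℝ) + 1) ∨ (deriv f x₂ < 0 ∧ g x₂ = (k : ℝ)) := by
    rcases h2'.lt_or_gt with hneg | hpos
    · right
      refine ⟨hneg, ?_⟩
      obtain ⟨t, ht, htm⟩ := ((ev_left_gt h2 hneg).and hev2).exists
      have hlt : g x₂ < (k:ℝ) + 1 := lt_trans (by simpa [hg] using ht) htm.2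
      rw [hgx2] at hlt hb2
      have : k₂ = k := by
        have u1 : k₂ < k + 1 := by exact_mod_cast hlt
        have u2 : k ≤ k₂ := by exact_mod_cast hb2.1
        omega
      rw [hgx2, this]
    · left
      refine ⟨hpos, ?_⟩
      obtain ⟨t, ht, htm⟩ := ((ev_left_lt h2 hpos).and hev2).exists
      have hlt : (k:ℝ) < g x₂ := lt_trans htm.1 (by simpa [hg] using ht)
      rw [hgx2] at hlt hb2
      have : k₂ = k + 1 := by
        have u1 : k < k₂ := by exact_mod_cast hlt
        have u2 : k₂ ≤ k + 1 := by exact_mod_cast hb2.2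
        omega
      rw [hgx2, this]; push_cast; ring
  have e1 : f x₁ - y = g x₁ := rfl
  have e2 : f x₂ - y = g x₂ := rfl
  rw [e1, e2]
  rcases hsign1 with ⟨hp1, hv1⟩ | ⟨hn1, hv1⟩ <;> rcases hsign2 with ⟨hp2, hv2⟩ | ⟨hn2, hv2⟩
  · rw [hv1, hv2, if_pos hp1, if_pos hp2]; ring
  · rw [hv1, hv2, if_pos hp1, if_neg (not_lt.mpr hn2.le)]; ring
  · rw [hv1, hv2, if_neg (not_lt.mpr hn1.le), if_pos hp2]; ring
  · rw [hv1, hv2, if_neg (not_lt.mpr hn1.le), if_neg (not_lt.mpr hn2.le)]; ring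

/-- Telescoping along a chain. -/
private lemma telescope (K σ : ℝ → ℝ) :
    ∀ (a : ℝ) (l : List ℝ),
      List.Chain (fun u v => 2 * (K v - K u) = σ u + σ v) a l →
      2 * (K ((a :: l).getLast (by simp)) - K a) =
        2 * ((a :: l).map σ).sum - σ a - σ ((a :: l).getLast (by simp)) := by
  intro a l
  induction l generalizing a with
  | nil => intro _; simp; ring
  | cons b t ih =>
    intro hc
    rcases hc with _ | _ | ⟨hab, hc⟩
    have hrec := ih b hc
    have hlast : ((a :: b :: t).getLast (by simp)) = ((b :: t).getLast (by simp)) := by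
      rw [List.getLast_cons (by simp)]
    rw [hlast]
    simp only [List.map_cons, List.sum_cons] at hrec ⊢
    linarith

theorem signed_count_of_regular_fiber_eq_degree (f : ℝ → ℝ) (d : ℤ)
    (hf : Continuous f) (hper : ∀ x, f (x + 1) = f x + d) (y : ℝ)
    (hF : {x | x ∈ Set.Ico (0 : ℝ) 1 ∧ ∃ k : ℤ, f x - y = k}.Finite)
    (hreg : ∀ x ∈ {x | x ∈ Set.Ico (0 : ℝ) 1 ∧ ∃ k : ℤ, f x - y = k},
      DifferentiableAt ℝ f x ∧ deriv f x ≠ 0) :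
    ∑ x ∈ hF.toFinset, (if 0 < deriv f x then (1 : ℤ) else -1) = d := by
  classical
  set F := {x | x ∈ Set.Ico (0 : ℝ) 1 ∧ ∃ k : ℤ, f x - y = k} with hFdef
  set S := hF.toFinset with hS
  have hmemS : ∀ x, x ∈ S ↔ x ∈ F := fun x => hF.mem_toFinset
  set L : List ℝ := S.sort (· ≤ ·) with hL
  have hLmem : ∀ x, x ∈ L ↔ x ∈ F := by
    intro x; rw [hL, Finset.mem_sort]; exact hmemS x
  set σ : ℝ → ℝ := fun x => if 0 < deriv f x then (1:ℝ) else -1 with hσ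
  -- reduce the goal to a statement about the sorted list L
  suffices hsuff : (L.map σ).sum = (d : ℝ) by
    have hperm : ((S.sort (· ≤ ·)).map σ).Perm (S.toList.map σ) :=
      (Finset.sort_perm_toList S _).map σ
    have h1 : (L.map σ).sum = ∑ x ∈ S, σ x := by
      rw [hL, hperm.sum_eq, Finset.sum_map_toList]
    have h2 : ((∑ x ∈ S, if 0 < deriv f x then (1:ℤ) else -1 : ℤ) : ℝ) = ∑ x ∈ S, σ x := by
      push_cast
      rfl
    have : ((∑ x ∈ S, if 0 < deriv f x then (1:ℤ) else -1 : ℤ) : ℝ) = (d:ℝ) := by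
      rw [h2, ← h1, hsuff]
    exact_mod_cast this
  rcases hL2 : L with _ | ⟨a, tl⟩
  · -- empty fiber: show d = 0
    have hFempty : ∀ x, x ∉ F := by
      intro x hx
      have : x ∈ L := (hLmem x).mpr hx
      rw [hL2] at this; simp at this
    simp only [List.map_nil, List.sum_nil]
    by_contra hd0
    have hd0' : d ≠ 0 := by
      intro h; apply hd0; rw [h]; simp
    have h0 : ∀ m : ℤ, f 0 - y ≠ m := by
      intro m hm
      exact hFempty 0 ⟨⟨le_refl 0, one_pos⟩, ⟨m, hm⟩⟩
    have hg1 : f 1 - y = (f 0 - y) + d := by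
      have := hper 0; rw [zero_add] at this; rw [this]; ring
    set g : ℝ → ℝ := fun u => f u - y with hg
    have hgc : Continuous g := hf.sub continuous_const
    have key : ∃ v : ℤ, (v:ℝ) ∈ Set.uIcc (g 0) (g 1) := by
      rcases lt_or_gt_of_ne hd0' with hd | hd
      · refine ⟨⌊g 0⌋, Set.mem_uIcc.mpr (Or.inr ⟨?_, Int.floor_le _⟩)⟩
        show g 1 ≤ (⌊g 0⌋ : ℝ)
        have he : g 1 = g 0 + d := hg1
        have : (d:ℝ) ≤ -1 := by exact_mod_cast (by omega : d ≤ -1)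
        have h2 := Int.lt_floor_add_one (g 0)
        linarith
      · refine ⟨⌈g 0⌉, Set.mem_uIcc.mpr (Or.inl ⟨Int.le_ceil _, ?_⟩)⟩
        show (⌈g 0⌉ : ℝ) ≤ g 1
        have he : g 1 = g 0 + d := hg1
        have : (1:ℝ) ≤ (d:ℝ) := by exact_mod_cast (by omega : 1 ≤ d)
        have h2 := Int.ceil_lt_add_one (g 0)
        linarith
    obtain ⟨v, hv⟩ := key
    obtain ⟨u, hu, hgu⟩ := intermediate_value_uIcc (hgc.continuousOn) hv
    rw [Set.uIcc_of_le (by norm_num : (0:ℝ) ≤ 1)] at hu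
    rcases eq_or_lt_of_le hu.2 with h1 | h1
    · have : g 0 = ((v - d : ℤ) : ℝ) := by
        have hv1 : g 1 = v := by rw [← h1]; exact hgu
        have he : g 1 = g 0 + d := hg1
        push_cast
        linarith
      exact h0 _ this
    · exact hFempty u ⟨⟨hu.1, h1⟩, ⟨v, hgu⟩⟩
  · -- nonempty fiber
    have hsorted : List.Pairwise (· < ·) L := by rw [hL]; exact (Finset.sortedLT_sort S).pairwise
    have haF : a ∈ F := (hLmem a).mp <| by rw [hL2]; exact List.mem_cons_self
    have haI : a ∈ Set.Ico (0:ℝ) 1 := haF.1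
    -- elements of L are in [0,1) and ≥ a
    have hLbound : ∀ x ∈ L, x ∈ Set.Ico (0:ℝ) 1 := fun x hx => ((hLmem x).mp hx).1
    have hamin : ∀ x ∈ L, a ≤ x := by
      intro x hx
      rw [hL2] at hx hsorted
      rcases List.mem_cons.mp hx with h | h
      · exact h.symm.le
      · exact ((List.pairwise_cons.mp hsorted).1 x h).le
    -- derivative data at a + 1
    have hfe : ∀ x, f x = f (x - 1) + d := by
      intro x
      have := hper (x - 1)
      rw [sub_add_cancel] at this
      rw [this]
    have hda : DifferentiableAt ℝ f a := (hreg a haF).1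
    have hda' : deriv f a ≠ 0 := (hreg a haF).2
    have hda1 : HasDerivAt f (deriv f a) (a + 1) := by
      have h1 : HasDerivAt (fun x : ℝ => x - 1) 1 (a + 1) := (hasDerivAt_id _).sub_const 1
      have h2 : HasDerivAt f (deriv f a) ((fun x : ℝ => x - 1) (a + 1)) := by
        simpa using hda.hasDerivAt
      have h3 : HasDerivAt (fun x => f (x - 1)) (deriv f a * 1) (a + 1) :=
        HasDerivAt.comp (a + 1) h2 h1
      have h4 : HasDerivAt (fun x => f (x - 1) + (d:ℝ)) (deriv f a * 1) (a + 1) :=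
        h3.add_const _
      have he : (fun x => f (x - 1) + (d:ℝ)) = f := funext fun x => (hfe x).symm
      rw [he] at h4
      simpa using h4
    have hdaderiv : deriv f (a + 1) = deriv f a := hda1.deriv
    have hka1 : ∃ k : ℤ, f (a + 1) - y = k := by
      obtain ⟨k, hk⟩ := haF.2
      exact ⟨k + d, by rw [hper a]; push_cast; linarith⟩
    -- the extended list
    set L' : List ℝ := L ++ [a + 1] with hL'
    have hnotmem : (a + 1) ∉ L := by
      intro h
      have := (hLbound _ h).2
      linarith [haI.1]
    have hsorted' : List.Pairwise (· < ·) L' := by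
      rw [hL', List.pairwise_append]
      refine ⟨hsorted, List.pairwise_singleton _ _, ?_⟩
      intro u hu b hb
      rw [List.mem_singleton] at hb
      subst hb
      have := (hLbound u hu).2
      linarith [haI.1]
    have hL'mem_bound : ∀ x ∈ L', 0 ≤ x ∧ x ≤ a + 1 := by
      intro x hx
      rw [hL', List.mem_append, List.mem_singleton] at hx
      rcases hx with hx | hx
      · exact ⟨(hLbound x hx).1, by linarith [(hLbound x hx).2, haI.1]⟩
      · subst hx; exact ⟨by linarith [haI.1], le_refl _⟩
    -- regularity data for elements of L'
    have hL'reg : ∀ x ∈ L', DifferentiableAt ℝ f x ∧ deriv f x ≠ 0 ∧ ∃ k : ℤ, f x - y = k := by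
      intro x hx
      rw [hL', List.mem_append, List.mem_singleton] at hx
      rcases hx with hx | hx
      · have := hreg x ((hLmem x).mp hx)
        exact ⟨this.1, this.2, ((hLmem x).mp hx).2⟩
      · subst hx
        exact ⟨hda1.differentiableAt, by rw [hdaderiv]; exact hda', hka1⟩
    -- the chain property
    set R : ℝ → ℝ → Prop := fun u v =>
      2 * ((f v - y) - (f u - y)) = σ u + σ v with hR
    have hp := List.pairwise_iff_getElem.mp hsorted'
    have hchain' : List.Chain' R L' := by
      rw [List.Chain', List.isChain_iff_getElem]
      intro i hi
      have hilt : i < L'.length := by omega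
      have hilt2 : i + 1 < L'.length := by omega
      set u := L'[i]'hilt with hu
      set v := L'[i + 1]'hilt2 with hv
      have huv : u < v := hp i (i + 1) hilt hilt2 (by omega)
      have humem : u ∈ L' := hu ▸ List.getElem_mem hilt
      have hvmem : v ∈ L' := hv ▸ List.getElem_mem hilt2
      have hmono : ∀ p q (hp1 : p < L'.length) (hq1 : q < L'.length),
          p ≤ q → L'[p]'hp1 ≤ L'[q]'hq1 := by
        intro p q hp1 hq1 hpq
        rcases eq_or_lt_of_le hpq with h | h
        · subst h; exact le_refl _
        · exact (hp p q hp1 hq1 h).le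
      have hcons : ∀ w ∈ L', ¬(u < w ∧ w < v) := by
        rintro w hw ⟨hw1, hw2⟩
        obtain ⟨j, hjlt, hjw⟩ := List.getElem_of_mem hw
        rcases le_or_gt j i with h | h
        · have hle : w ≤ u := by
            rw [← hjw, hu]; exact hmono j i hjlt hilt h
          linarith
        · have hle : v ≤ w := by
            rw [← hjw, hv]; exact hmono (i + 1) j hilt2 hjlt (Nat.succ_le_of_lt h)
          linarith
      have hgap : ∀ t ∈ Set.Ioo u v, ∀ k : ℤ, f t - y ≠ k := by
        intro t ht k hk
        have h0t : (0:ℝ) ≤ u := (hL'mem_bound u humem).1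
        have hva : v ≤ a + 1 := (hL'mem_bound v hvmem).2
        rcases lt_trichotomy t 1 with h1 | h1 | h1
        · have htF : t ∈ F := ⟨⟨by linarith [ht.1], h1⟩, ⟨k, hk⟩⟩
          have : t ∈ L' := by
            rw [hL', List.mem_append]; exact Or.inl ((hLmem t).mpr htF)
          exact hcons t this ⟨ht.1, ht.2⟩
        · -- t = 1
          have h0F : (0:ℝ) ∈ F := by
            refine ⟨⟨le_refl 0, one_pos⟩, ⟨k - d, ?_⟩⟩
            have hp0 := hper 0
            rw [zero_add] at hp0
            rw [h1, hp0] at hk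
            push_cast
            linarith
          have h0L : (0:ℝ) ∈ L := (hLmem 0).mpr h0F
          have ha0 : a ≤ 0 := hamin 0 h0L
          have : a = 0 := le_antisymm ha0 haI.1
          rw [this] at hva
          rw [h1] at ht
          linarith [ht.2]
        · -- t > 1
          have htm : t - 1 ∈ F := by
            refine ⟨⟨by linarith, by linarith [ht.2, hva, haI.2]⟩, ⟨k - d, ?_⟩⟩
            have hp1 := hper (t - 1)
            rw [sub_add_cancel] at hp1
            rw [hp1] at hk
            push_cast
            linarith
          have : a ≤ t - 1 := hamin _ ((hLmem _).mpr htm)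
          have : t - 1 < a := by linarith [ht.2, hva]
          linarith
      have hu' := hL'reg u humem
      have hv' := hL'reg v hvmem
      exact pair_step f y hf huv hu'.1 hu'.2.1 hv'.1 hv'.2.1 hu'.2.2 hv'.2.2 hgap
    -- convert to a Chain from head a
    have hL'eq : L' = a :: (tl ++ [a + 1]) := by rw [hL', hL2]; simp
    have hchain : List.Chain R a (tl ++ [a + 1]) := by
      rw [hL'eq] at hchain'
      exact hchain'
    have htel := telescope (fun x => f x - y) σ a (tl ++ [a + 1]) hchain
    have hlast : ((a :: (tl ++ [a + 1])).getLast (by simp)) = a + 1 := by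
      have he : a :: (tl ++ [a + 1]) = (a :: tl) ++ [a + 1] := by simp
      rw [List.getLast_congr _ (by simp) he, List.getLast_append_of_ne_nil _ (by simp)]
      rfl
    rw [hlast] at htel
    have hKd : (f (a + 1) - y) - (f a - y) = (d : ℝ) := by
      rw [hper a]; ring
    have hσa : σ (a + 1) = σ a := by rw [hσ]; simp only [hdaderiv]
    have hmap : ((a :: (tl ++ [a + 1])).map σ).sum = ((a :: tl).map σ).sum + σ a := by
      simp [hσa]
      ring
    rw [hKd, hσa, hmap] at htel
    linarith
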